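/- Let ψ be a holomorphic injective map from a domain U ⊆ ℂ onto a domain in ℂ. Suppose A ⊆ U is a nondegenerate line segment, ψ maps A into a line, and |ψ'| is constant along A. Then ψ is the restriction of a complex affine map z ↦ az + b. -/

import Mathlib

/-- A conformal (holomorphic injective) map of a domain `U ⊆ ℂ` that sends a nondegenerate
line segment `A ⊆ U` into a line and whose derivative has constant modulus along `A`
is the restriction of a complex affine map `z ↦ a z + b`. -/
theorem conformal_affine_of_line_and_const_modulus
    (U : Set ℂ) (hUo : IsOpen U) (hUc : IsConnected U)
    (ψ : ℂ → ℂ) (hψ : ∀ z ∈ U, DifferentiableAt ℂ ψ z) (hinj : Set.InjOn ψ U)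
    (z₀ v : ℂ) (hv : v ≠ 0) (t₀ t₁ : ℝ) (ht : t₀ < t₁)
    (A : Set ℂ) (hA : A = (fun t : ℝ => z₀ + (t : ℂ) * v) '' Set.Icc t₀ t₁)
    (hAU : A ⊆ U)
    (w₀ w : ℂ) (hw : w ≠ 0)
    (hline : ∀ z ∈ A, ∃ t : ℝ, ψ z = w₀ + (t : ℂ) * w)
    (c : ℝ) (hc : ∀ z ∈ A, ‖deriv ψ z‖ = c) :
    ∃ a b : ℂ, a ≠ 0 ∧ ∀ z ∈ U, ψ z = a * z + b := by
  classical
  set L : ℝ → ℂ := fun t => z₀ + (t : ℂ) * v with hLdef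
  have hLder : ∀ t : ℝ, HasDerivAt L v t := by
    intro t
    have h1 : HasDerivAt (fun τ : ℝ => (τ : ℂ)) 1 t := Complex.ofRealCLM.hasDerivAt
    show HasDerivAt (fun t : ℝ => z₀ + (t : ℂ) * v) v t
    simpa using (h1.mul_const v).const_add z₀
  have hLmem : ∀ t ∈ Set.Icc t₀ t₁, L t ∈ A := by
    intro t ht'
    rw [hA]; exact ⟨t, ht', rfl⟩
  have hLU : ∀ t ∈ Set.Icc t₀ t₁, L t ∈ U := fun t ht' => hAU (hLmem t ht')
  -- derivative of ψ ∘ L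
  have hcomp : ∀ t ∈ Set.Ioo t₀ t₁, HasDerivAt (fun τ => ψ (L τ)) (deriv ψ (L t) * v) t := by
    intro t ht'
    have hz : L t ∈ U := hLU t (Set.mem_Icc_of_Ioo ht')
    have h := (hψ (L t) hz).hasDerivAt
    have := (h.hasFDerivAt.restrictScalars ℝ).comp_hasDerivAt (x := t) (hLder t)
    exact h.comp t (hLder t)
  -- imaginary part of (ψ (L t) - w₀)/w vanishes on [t₀, t₁]
  have him : ∀ t ∈ Set.Icc t₀ t₁, ((ψ (L t) - w₀) / w).im = 0 := by
    intro t ht'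
    obtain ⟨t', hψt⟩ := hline (L t) (hLmem t ht')
    rw [hψt]
    rw [add_sub_cancel_left, mul_div_assoc, div_self hw, mul_one, Complex.ofReal_im]
  -- hence the directional derivative is a real multiple of w
  have hre : ∀ t ∈ Set.Ioo t₀ t₁, (deriv ψ (L t) * v / w).im = 0 := by
    intro t ht'
    have h1 : HasDerivAt (fun τ => (ψ (L τ) - w₀) / w) (deriv ψ (L t) * v / w) t :=
      ((hcomp t ht').sub_const w₀).div_const w
    have hu : HasDerivAt (fun τ => ((ψ (L τ) - w₀) / w).im) ((deriv ψ (L t) * v / w).im) t :=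
      Complex.imCLM.hasFDerivAt.comp_hasDerivAt t h1
    have h0 : HasDerivAt (fun τ => ((ψ (L τ) - w₀) / w).im) 0 t := by
      have hev : (fun τ => ((ψ (L τ) - w₀) / w).im) =ᶠ[nhds t] fun _ => (0 : ℝ) := by
        filter_upwards [isOpen_Ioo.mem_nhds ht'] with τ hτ
        exact him τ (Set.mem_Icc_of_Ioo hτ)
      exact (hasDerivAt_const t (0 : ℝ)).congr_of_eventuallyEq hev
    exact hu.unique h0
  set s : ℝ → ℝ := fun t => (deriv ψ (L t) * v / w).re with hsdef
  have hq : ∀ t ∈ Set.Ioo t₀ t₁, (deriv ψ (L t) * v / w : ℂ) = ((s t : ℝ) : ℂ) := by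
    intro t ht'
    exact Complex.ext rfl (by simp [hre t ht'])
  have hform : ∀ t ∈ Set.Ioo t₀ t₁, deriv ψ (L t) = ((s t : ℝ) : ℂ) * w / v := by
    intro t ht'
    have h1 : deriv ψ (L t) = (deriv ψ (L t) * v / w) * w / v := by field_simp
    rw [h1, hq t ht']
  -- |s| is constant on the open interval
  have habs : ∀ t ∈ Set.Ioo t₀ t₁, |s t| = c * ‖v‖ / ‖w‖ := by
    intro t ht'
    have h1 : ‖deriv ψ (L t) * v / w‖ = c * ‖v‖ / ‖w‖ := by
      rw [norm_div, norm_mul, hc (L t) (hLmem t (Set.mem_Icc_of_Ioo ht'))]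
    rw [hq t ht'] at h1
    simpa using h1
  set tm : ℝ := (t₀ + t₁) / 2 with htmdef
  have htm : tm ∈ Set.Ioo t₀ t₁ := ⟨by simp [htmdef]; linarith, by simp [htmdef]; linarith⟩
  -- continuity of s on the open interval
  have hdiffOn : DifferentiableOn ℂ ψ U := fun z hz => (hψ z hz).differentiableWithinAt
  have hψan : AnalyticOnNhd ℂ ψ U := hdiffOn.analyticOnNhd hUo
  have hdc : ContinuousOn (deriv ψ) U := (hψan.deriv).continuousOn
  have hLc : Continuous L := by
    apply Continuous.add continuous_const
    exact (Complex.continuous_ofReal).mul continuous_const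
  have hscont : ContinuousOn s (Set.Ioo t₀ t₁) := by
    apply Complex.continuous_re.comp_continuousOn
    apply ContinuousOn.div_const
    apply ContinuousOn.mul _ continuousOn_const
    exact hdc.comp hLc.continuousOn fun t ht' => hLU t (Set.mem_Icc_of_Ioo ht')
  -- s is constant on the open interval (IVT)
  have hconst : ∀ t ∈ Set.Ioo t₀ t₁, s t = s tm := by
    intro t ht'
    by_contra hne
    have h1 : |s t| = |s tm| := by rw [habs t ht', habs tm htm]
    have h2 : s t = -s tm := by
      rcases abs_eq_abs.mp h1 with h | h
      · exact absurd h hne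
      · exact h
    have h3 : s tm ≠ 0 := by
      intro h0
      exact hne (by rw [h2, h0]; simp)
    have hsub : Set.uIcc t tm ⊆ Set.Ioo t₀ t₁ :=
      Set.ordConnected_Ioo.uIcc_subset ht' htm
    have h0mem : (0 : ℝ) ∈ Set.uIcc (s t) (s tm) := by
      rw [h2, Set.mem_uIcc]
      rcases le_total 0 (s tm) with h | h
      · left; constructor <;> linarith
      · right; constructor <;> linarith
    obtain ⟨τ, hτ, hsτ⟩ := intermediate_value_uIcc (hscont.mono hsub) h0mem
    have h4 : |s τ| = c * ‖v‖ / ‖w‖ := habs τ (hsub hτ)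
    rw [hsτ, abs_zero] at h4
    have h5 : |s tm| = 0 := by rw [habs tm htm, ← h4]
    exact h3 (abs_eq_zero.mp h5)
  set a : ℂ := deriv ψ (L tm) with hadef
  have hderiv_eq : ∀ t ∈ Set.Ioo t₀ t₁, deriv ψ (L t) = a := by
    intro t ht'
    rw [hform t ht', hconst t ht', hadef, hform tm htm]
  -- ψ ∘ L is affine on a subinterval [tm, β]
  set β : ℝ := (tm + t₁) / 2 with hβdef
  have hβ : tm < β := by simp only [hβdef]; linarith [htm.2]
  have hIccsub : Set.Icc tm β ⊆ Set.Ioo t₀ t₁ := by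
    intro x hx
    constructor
    · linarith [htm.1, hx.1]
    · have : β < t₁ := by simp only [hβdef]; linarith [htm.2]
      linarith [hx.2]
  set b : ℂ := ψ (L tm) - a * L tm with hbdef
  set f : ℝ → ℂ := fun t => ψ (L t) - a * L t with hfdef
  have hfderiv : ∀ x ∈ Set.Ioo t₀ t₁, HasDerivAt f 0 x := by
    intro x hx
    have h1 : HasDerivAt (fun τ => a * L τ) (a * v) x := (hLder x).const_mul a
    have h2 : HasDerivAt f (deriv ψ (L x) * v - a * v) x := (hcomp x hx).sub h1
    rwa [hderiv_eq x hx, sub_self] at h2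
  have hfa : ∀ x ∈ Set.Icc tm β, f x = f tm := by
    apply constant_of_has_deriv_right_zero
    · intro x hx
      exact ((hfderiv x (hIccsub hx)).differentiableAt.continuousAt).continuousWithinAt
    · intro x hx
      exact (hfderiv x (hIccsub ⟨hx.1, le_of_lt hx.2⟩)).hasDerivWithinAt
  have haff : ∀ x ∈ Set.Icc tm β, ψ (L x) = a * L x + b := by
    intro x hx
    have h := hfa x hx
    simp only [hfdef] at h
    rw [hbdef]
    linear_combination h
  -- identity theorem
  have hgan : AnalyticOnNhd ℂ (fun z => a * z + b) U :=
    (fun z _ => ((analyticAt_const.mul analyticAt_id).add analyticAt_const : AnalyticAt ℂ _ z))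
  have hfreq : ∃ᶠ z in nhdsWithin (L tm) {L tm}ᶜ, ψ z = a * z + b := by
    have hseq : Filter.Tendsto (fun n : ℕ => L (tm + (β - tm) / (n + 1))) Filter.atTop
        (nhdsWithin (L tm) {L tm}ᶜ) := by
      rw [tendsto_nhdsWithin_iff]
      constructor
      · have h1 : Filter.Tendsto (fun n : ℕ => tm + (β - tm) / (n + 1)) Filter.atTop (nhds tm) := by
          have h2 : Filter.Tendsto (fun n : ℕ => (β - tm) * (1 / (n + 1))) Filter.atTop
              (nhds ((β - tm) * 0)) :=
            tendsto_one_div_add_atTop_nhds_zero_nat.const_mul (β - tm)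
        
          have h3 : Filter.Tendsto (fun n : ℕ => (β - tm) / (n + 1)) Filter.atTop (nhds 0) := by
            simpa [mul_one_div, div_eq_mul_inv] using h2
          simpa using h3.const_add tm
        exact (hLc.tendsto tm).comp h1
      · apply Filter.Eventually.of_forall
        intro n
        simp only [Set.mem_compl_iff, Set.mem_singleton_iff]
        intro hcontra
        have h4 : ((tm + (β - tm) / (n + 1) : ℝ) : ℂ) * v = ((tm : ℝ) : ℂ) * v := by
          have := hcontra
          simp only [hLdef] at this
          exact add_left_cancel this
        have h5 : ((tm + (β - tm) / (n + 1) : ℝ) : ℂ) = ((tm : ℝ) : ℂ) :=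
          mul_right_cancel₀ hv h4
        have h6 : tm + (β - tm) / (n + 1) = tm := Complex.ofReal_injective h5
        have h7 : (β - tm) / (n + 1) > 0 := by
          apply div_pos (by linarith) (by positivity)
        linarith
    apply hseq.frequently
    apply Filter.Frequently.of_forall
    intro n
    have hmem : tm + (β - tm) / (n + 1) ∈ Set.Icc tm β := by
      have h7 : (0:ℝ) < (β - tm) / (n + 1) := div_pos (by linarith) (by positivity)
      have h8 : (β - tm) / (n + 1) ≤ β - tm := by
        apply div_le_self (by linarith) (le_add_of_nonneg_left (Nat.cast_nonneg n))
      exact ⟨by linarith, by linarith⟩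
    exact haff _ hmem
  have heq : Set.EqOn ψ (fun z => a * z + b) U :=
    hψan.eqOn_of_preconnected_of_frequently_eq hgan hUc.isPreconnected
      (hLU tm (Set.mem_Icc_of_Ioo htm)) hfreq
  -- a ≠ 0 from injectivity
  have ha : a ≠ 0 := by
    intro ha0
    obtain ⟨z₁, hz₁⟩ := hUc.nonempty
    obtain ⟨ε, hε, hball⟩ := Metric.isOpen_iff.mp hUo z₁ hz₁
    have hz₂ : z₁ + ((ε / 2 : ℝ) : ℂ) ∈ U := by
      apply hball
      rw [Metric.mem_ball, dist_eq_norm, add_sub_cancel_left, Complex.norm_real,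
        Real.norm_eq_abs, abs_of_pos (by linarith)]
      linarith
    have hψeq : ψ z₁ = ψ (z₁ + ((ε / 2 : ℝ) : ℂ)) := by
      rw [heq hz₁, heq hz₂, ha0]
      simp
    have h9 := hinj hz₁ hz₂ hψeq
    have h10 := congrArg Complex.re h9
    simp [Complex.add_re, Complex.ofReal_re] at h10
    linarith
  exact ⟨a, b, ha, fun z hz => heq hz⟩
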